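/- Let f : ℍ → ℍ and g : ℍ → ℝ (regarded as the real-valued quaternion function q ↦ (g(q) : ℍ)) be real-(Fréchet-)differentiable at q ∈ ℍ, and let μ ∈ ℍ be nonzero. Then the left GHR derivatives of the product fg satisfy the traditional product rule ∂(fg)/∂q^μ(q) = f(q)·∂g/∂q^μ(q) + ∂f/∂q^μ(q)·g(q) and ∂(fg)/∂q^{μ*}(q) = f(q)·∂g/∂q^{μ*}(q) + ∂f/∂q^{μ*}(q)·g(q). -/

import Mathlib

open Quaternion Filter Topology Asymptotics

noncomputable section

/-- The imaginary unit `i` of the real quaternions. -/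
def qI : ℍ[ℝ] := ⟨0, 1, 0, 0⟩
/-- The imaginary unit `j` of the real quaternions. -/
def qJ : ℍ[ℝ] := ⟨0, 0, 1, 0⟩
/-- The imaginary unit `k` of the real quaternions. -/
def qK : ℍ[ℝ] := ⟨0, 0, 0, 1⟩

/-- Quaternion rotation `p ↦ μ p μ⁻¹`. -/
def qRot (μ p : ℍ[ℝ]) : ℍ[ℝ] := μ * p * μ⁻¹

/-- The left GHR derivative `∂f/∂q^μ` at `q`. -/
def lD (f : ℍ[ℝ] → ℍ[ℝ]) (μ q : ℍ[ℝ]) : ℍ[ℝ] :=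
  (4 : ℍ[ℝ])⁻¹ * (fderiv ℝ f q 1 - fderiv ℝ f q qI * qRot μ qI
    - fderiv ℝ f q qJ * qRot μ qJ - fderiv ℝ f q qK * qRot μ qK)

/-- The left conjugate GHR derivative `∂f/∂q^{μ*}` at `q`. -/
def lDc (f : ℍ[ℝ] → ℍ[ℝ]) (μ q : ℍ[ℝ]) : ℍ[ℝ] :=
  (4 : ℍ[ℝ])⁻¹ * (fderiv ℝ f q 1 + fderiv ℝ f q qI * qRot μ qI
    + fderiv ℝ f q qJ * qRot μ qJ + fderiv ℝ f q qK * qRot μ qK)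

/-- The right GHR derivative `∂ᵣf/∂q^μ` at `q`. -/
def rD (f : ℍ[ℝ] → ℍ[ℝ]) (μ q : ℍ[ℝ]) : ℍ[ℝ] :=
  (4 : ℍ[ℝ])⁻¹ * (fderiv ℝ f q 1 - qRot μ qI * fderiv ℝ f q qI
    - qRot μ qJ * fderiv ℝ f q qJ - qRot μ qK * fderiv ℝ f q qK)

/-- The right conjugate GHR derivative `∂ᵣf/∂q^{μ*}` at `q`. -/
def rDc (f : ℍ[ℝ] → ℍ[ℝ]) (μ q : ℍ[ℝ]) : ℍ[ℝ] :=
  (4 : ℍ[ℝ])⁻¹ * (fderiv ℝ f q 1 + qRot μ qI * fderiv ℝ f q qI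
    + qRot μ qJ * fderiv ℝ f q qJ + qRot μ qK * fderiv ℝ f q qK)

lemma coe4 : ((4:ℝ):ℍ[ℝ]) = 4 := by
  have := Quaternion.coe_natCast (R := ℝ) 4
  norm_num at this ⊢
  exact this.symm ▸ rfl

set_option maxHeartbeats 2000000 in
theorem left_GHR_product_rule_real_factor
    (f : ℍ[ℝ] → ℍ[ℝ]) (g : ℍ[ℝ] → ℝ) (q μ : ℍ[ℝ])
    (hf : DifferentiableAt ℝ f q)
    (hg : DifferentiableAt ℝ (fun p => ((g p : ℝ) : ℍ[ℝ])) q)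
    (hμ : μ ≠ 0) :
    lD (fun p => f p * ((g p : ℝ) : ℍ[ℝ])) μ q
      = f q * lD (fun p => ((g p : ℝ) : ℍ[ℝ])) μ q + lD f μ q * ((g q : ℝ) : ℍ[ℝ]) ∧
    lDc (fun p => f p * ((g p : ℝ) : ℍ[ℝ])) μ q
      = f q * lDc (fun p => ((g p : ℝ) : ℍ[ℝ])) μ q + lDc f μ q * ((g q : ℝ) : ℍ[ℝ]) := by
  have hmul : ∀ v, fderiv ℝ (fun p => f p * ((g p : ℝ) : ℍ[ℝ])) q v
      = f q * fderiv ℝ (fun p => ((g p : ℝ) : ℍ[ℝ])) q v + fderiv ℝ f q v * ((g q : ℝ) : ℍ[ℝ]) := by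
    intro v
    rw [fderiv_fun_mul' hf hg]
    simp [smul_eq_mul]
  have h4 : (4:ℍ[ℝ])⁻¹ = (((4:ℝ)⁻¹:ℝ):ℍ[ℝ]) := by rw [Quaternion.coe_inv, coe4]
  constructor <;>
  · simp only [lD, lDc, hmul]
    simp only [h4, Quaternion.coe_mul_eq_smul, Quaternion.mul_coe_eq_smul, mul_smul_comm,
      smul_mul_assoc, mul_sub, mul_add, sub_mul, add_mul, smul_sub, smul_add, mul_assoc]
    module

end
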